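/- Let μ₃ be the triadic self-similar measure satisfying ∫ f dμ₃ = (1/2)(∫ f(x/3) dμ₃ + ∫ f(x/3 + 2/3) dμ₃). Then with λ = 3/4 and λ' = 9/4, the exponentials e_λ and e_{λ'} are each orthogonal to e₀ in L²(μ₃), but ⟨e_λ, e_{λ'}⟩_{μ₃} = μ̂₃(3/2) ≠ 0; i.e., e_λ and e_{λ'} are not orthogonal. -/

import Mathlib

open MeasureTheory Real Filter

section Aux

variable {μ : Measure ℝ} [IsProbabilityMeasure μ]

lemma intg_bdd {g : ℝ → ℝ} (hg : Continuous g) {B : ℝ} (hb : ∀ x, |g x| ≤ B) :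
    Integrable g μ :=
  (integrable_const B).mono' hg.aestronglyMeasurable (ae_of_all _ fun x => by simpa using hb x)

/-- Splitting a complex exponential integral into real cos/sin parts. -/
lemma integral_exp_I (θ : ℝ → ℝ) (hθ : Continuous θ) :
    ∫ x, Complex.exp ((θ x : ℂ) * Complex.I) ∂μ
      = ((∫ x, Real.cos (θ x) ∂μ : ℝ) : ℂ) + ((∫ x, Real.sin (θ x) ∂μ : ℝ) : ℂ) * Complex.I := by
  have hcos : Integrable (fun x => Real.cos (θ x)) μ :=
    intg_bdd (Real.continuous_cos.comp hθ) (fun x => Real.abs_cos_le_one _)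
  have hsin : Integrable (fun x => Real.sin (θ x)) μ :=
    intg_bdd (Real.continuous_sin.comp hθ) (fun x => Real.abs_sin_le_one _)
  have h1 : ∀ x : ℝ, Complex.exp ((θ x : ℂ) * Complex.I)
      = ((Real.cos (θ x) : ℝ) : ℂ) + ((Real.sin (θ x) : ℝ) : ℂ) * Complex.I := by
    intro x
    rw [Complex.exp_mul_I, Complex.ofReal_cos, Complex.ofReal_sin]
  simp_rw [h1]
  have hcos' : Integrable (fun x => ((Real.cos (θ x) : ℝ) : ℂ)) μ := hcos.ofReal
  have hsin' : Integrable (fun x => ((Real.sin (θ x) : ℝ) : ℂ)) μ := hsin.ofReal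
  have e3 : ∫ x, ((Real.cos (θ x) : ℝ) : ℂ) ∂μ = ((∫ x, Real.cos (θ x) ∂μ : ℝ) : ℂ) :=
    integral_ofReal
  have e4 : ∫ x, ((Real.sin (θ x) : ℝ) : ℂ) ∂μ = ((∫ x, Real.sin (θ x) ∂μ : ℝ) : ℂ) :=
    integral_ofReal
  rw [integral_add hcos' (hsin'.mul_const Complex.I), integral_mul_const, e3, e4]

end Aux

noncomputable def Ftri (μ : Measure ℝ) (t : ℝ) : ℂ :=
  ∫ x, Complex.exp ((((2 : ℝ) * Real.pi * (t * x) : ℝ) : ℂ) * Complex.I) ∂μ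

section Main

variable {μ : Measure ℝ} [IsProbabilityMeasure μ]
  (hμ : ∀ f : ℝ → ℝ, Continuous f →
      ∫ x, f x ∂μ =
        (1 / 2) * ((∫ x, f (x / 3) ∂μ) + ∫ x, f (x / 3 + 2 / 3) ∂μ))

include hμ

lemma Ftri_eq (t : ℝ) :
    Ftri μ t = (1 / 2 : ℂ) * (1 + Complex.exp (((4 * Real.pi * t / 3 : ℝ) : ℂ) * Complex.I))
      * Ftri μ (t / 3) := by
  have hcont : Continuous fun x : ℝ => 2 * Real.pi * (t * x) := by continuity
  have hcont' : Continuous fun x : ℝ => 2 * Real.pi * (t / 3 * x) := by continuity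
  have hcont'' : Continuous fun x : ℝ => 2 * Real.pi * (t / 3 * x) + 4 * Real.pi * t / 3 := by
    continuity
  have e1 : ∀ x : ℝ, 2 * Real.pi * (t * (x / 3)) = 2 * Real.pi * (t / 3 * x) := fun x => by ring
  have e2 : ∀ x : ℝ, 2 * Real.pi * (t * (x / 3 + 2 / 3))
      = 2 * Real.pi * (t / 3 * x) + 4 * Real.pi * t / 3 := fun x => by ring
  have hC := hμ (fun x => Real.cos (2 * Real.pi * (t * x)))
    (Real.continuous_cos.comp hcont)
  have hS := hμ (fun x => Real.sin (2 * Real.pi * (t * x)))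
    (Real.continuous_sin.comp hcont)
  simp only [e1, e2] at hC hS
  have hF1 : Ftri μ t
      = ((∫ x, Real.cos (2 * Real.pi * (t * x)) ∂μ : ℝ) : ℂ)
        + ((∫ x, Real.sin (2 * Real.pi * (t * x)) ∂μ : ℝ) : ℂ) * Complex.I :=
    integral_exp_I _ hcont
  have hF2 : Ftri μ (t / 3)
      = ((∫ x, Real.cos (2 * Real.pi * (t / 3 * x)) ∂μ : ℝ) : ℂ)
        + ((∫ x, Real.sin (2 * Real.pi * (t / 3 * x)) ∂μ : ℝ) : ℂ) * Complex.I :=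
    integral_exp_I _ hcont'
  have hF3 : Complex.exp (((4 * Real.pi * t / 3 : ℝ) : ℂ) * Complex.I) * Ftri μ (t / 3)
      = ((∫ x, Real.cos (2 * Real.pi * (t / 3 * x) + 4 * Real.pi * t / 3) ∂μ : ℝ) : ℂ)
        + ((∫ x, Real.sin (2 * Real.pi * (t / 3 * x) + 4 * Real.pi * t / 3) ∂μ : ℝ) : ℂ)
          * Complex.I := by
    rw [Ftri, ← integral_const_mul]
    have : ∀ x : ℝ, Complex.exp (((4 * Real.pi * t / 3 : ℝ) : ℂ) * Complex.I)
        * Complex.exp ((((2 : ℝ) * Real.pi * (t / 3 * x) : ℝ) : ℂ) * Complex.I)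
        = Complex.exp (((2 * Real.pi * (t / 3 * x) + 4 * Real.pi * t / 3 : ℝ) : ℂ)
            * Complex.I) := by
      intro x
      rw [← Complex.exp_add]
      congr 1
      push_cast
      ring
    simp_rw [this]
    exact integral_exp_I _ hcont''
  rw [mul_assoc, add_mul, one_mul, hF3, hF1, hF2]
  rw [hC, hS]
  push_cast
  ring

lemma Ftri_min_le (c : ℝ) (hc : 0 ≤ c) :
    ∫ x, min (c * |x|) 2 ∂μ ≤ c / 2 := by
  have hcontm : ∀ d : ℝ, Continuous fun x : ℝ => min (d * |x|) 2 := fun d =>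
    (continuous_const.mul continuous_abs).min continuous_const
  have hbd : ∀ d : ℝ, 0 ≤ d → ∀ x : ℝ, |min (d * |x|) 2| ≤ 2 := by
    intro d hd x
    rw [abs_le]
    constructor
    · have : (0:ℝ) ≤ min (d * |x|) 2 := le_min (mul_nonneg hd (abs_nonneg x)) (by norm_num)
      linarith
    · exact min_le_right _ _
  have hint : ∀ d : ℝ, 0 ≤ d → Integrable (fun x => min (d * |x|) 2) μ := fun d hd =>
    intg_bdd (hcontm d) (hbd d hd)
  -- single step
  have step : ∀ d : ℝ, 0 ≤ d →
      ∫ x, min (d * |x|) 2 ∂μ ≤ (∫ x, min (d / 3 * |x|) 2 ∂μ) + d / 3 := by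
    intro d hd
    have h := hμ (fun x => min (d * |x|) 2) (hcontm d)
    have e1 : ∀ x : ℝ, min (d * |x / 3|) 2 = min (d / 3 * |x|) 2 := by
      intro x
      congr 1
      rw [abs_div]
      norm_num
      ring
    have hle : ∀ x : ℝ, min (d * |x / 3 + 2 / 3|) 2 ≤ min (d / 3 * |x|) 2 + 2 * d / 3 := by
      intro x
      have h1 : d * |x / 3 + 2 / 3| ≤ d / 3 * |x| + 2 * d / 3 := by
        have h2 : |x / 3 + 2 / 3| ≤ |x| / 3 + 2 / 3 := by
          calc |x / 3 + 2 / 3| ≤ |x / 3| + |(2 / 3 : ℝ)| := abs_add_le _ _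
            _ = |x| / 3 + 2 / 3 := by rw [abs_div]; norm_num
        nlinarith [abs_nonneg (x / 3 + 2 / 3 : ℝ)]
      calc min (d * |x / 3 + 2 / 3|) 2 ≤ min (d / 3 * |x| + 2 * d / 3) 2 :=
            min_le_min h1 le_rfl
        _ ≤ min (d / 3 * |x| + 2 * d / 3) (2 + 2 * d / 3) :=
            min_le_min le_rfl (by linarith [mul_nonneg (by norm_num : (0:ℝ) ≤ 2/3) hd])
        _ = min (d / 3 * |x|) 2 + 2 * d / 3 := by
            rw [← min_add_add_right]
    have hint2 : Integrable (fun x => min (d / 3 * |x|) 2 + 2 * d / 3) μ :=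
      (hint (d/3) (by linarith)).add (integrable_const _)
    have hint1 : Integrable (fun x => min (d * |x / 3 + 2 / 3|) 2) μ :=
      intg_bdd ((hcontm d).comp (by continuity)) (by
        intro x
        exact hbd d hd _)
    have hmono : ∫ x, min (d * |x / 3 + 2 / 3|) 2 ∂μ
        ≤ ∫ x, (min (d / 3 * |x|) 2 + 2 * d / 3) ∂μ :=
      integral_mono hint1 hint2 hle
    rw [integral_add (hint (d/3) (by linarith)) (integrable_const _), integral_const,
      probReal_univ] at hmono
    simp only [ENNReal.toReal_one, one_smul, smul_eq_mul] at hmono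
    simp only [e1] at h
    rw [h]
    linarith
  -- iterate
  have iter : ∀ n : ℕ, ∀ d : ℝ, 0 ≤ d →
      ∫ x, min (d * |x|) 2 ∂μ ≤ (∫ x, min (d / 3 ^ n * |x|) 2 ∂μ) + d / 2 := by
    intro n
    induction n with
    | zero => intro d hd; simp; linarith
    | succ n ih =>
      intro d hd
      have h1 := step d hd
      have h2 := ih (d / 3) (by linarith)
      have e : d / 3 / 3 ^ n = d / 3 ^ (n + 1) := by
        rw [pow_succ]; ring
      rw [e] at h2
      linarith
  -- limit
  have hlim : Tendsto (fun n : ℕ => ∫ x, min (c / 3 ^ n * |x|) 2 ∂μ) atTop (nhds 0) := by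
    have h0 : (0:ℝ) = ∫ x : ℝ, (0:ℝ) ∂μ := by simp
    rw [h0]
    apply tendsto_integral_of_dominated_convergence (fun _ => (2:ℝ))
    · intro n
      exact (hcontm _).aestronglyMeasurable
    · exact integrable_const 2
    · intro n
      refine ae_of_all _ fun x => ?_
      have : 0 ≤ c / 3 ^ n := by positivity
      simpa using hbd _ this x
    · refine ae_of_all _ fun x => ?_
      have h1 : Tendsto (fun n : ℕ => c / 3 ^ n * |x|) atTop (nhds 0) := by
        have : Tendsto (fun n : ℕ => ((1:ℝ) / 3) ^ n) atTop (nhds 0) :=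
          tendsto_pow_atTop_nhds_zero_of_lt_one (by norm_num) (by norm_num)
        have h2 := (this.const_mul c).mul_const |x|
        simp only [mul_zero, zero_mul] at h2
        convert h2 using 2 with n
        rw [div_pow, one_pow]
        ring
      have h2 : Tendsto (fun n : ℕ => min (c / 3 ^ n * |x|) 2) atTop (nhds (min 0 2)) :=
        h1.min tendsto_const_nhds
      simpa using h2
  have key : ∫ x, min (c * |x|) 2 ∂μ - c / 2 ≤ 0 :=
    ge_of_tendsto hlim (by filter_upwards with n; linarith [iter n c hc])
  linarith

lemma Ftri_small (t : ℝ) (ht : 0 ≤ t) (ht2 : 2 * Real.pi * t < 2) : Ftri μ t ≠ 0 := by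
  have hcont : Continuous fun x : ℝ => 2 * Real.pi * (t * x) := by continuity
  have hF : Ftri μ t
      = ((∫ x, Real.cos (2 * Real.pi * (t * x)) ∂μ : ℝ) : ℂ)
        + ((∫ x, Real.sin (2 * Real.pi * (t * x)) ∂μ : ℝ) : ℂ) * Complex.I :=
    integral_exp_I _ hcont
  have hc : (0:ℝ) ≤ 2 * Real.pi * t := by positivity
  have hcos_ge : ∀ θ : ℝ, 1 - min |θ| 2 ≤ Real.cos θ := by
    intro θ
    rcases le_total |θ| 2 with h | h
    · rw [min_eq_left h]
      -- 1 - |θ| ≤ cos θ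
      have h1 : Real.cos θ = 1 - 2 * Real.sin (θ / 2) ^ 2 := by
        have hc2 := Real.cos_two_mul (θ / 2)
        have hsq := Real.sin_sq_add_cos_sq (θ / 2)
        rw [show 2 * (θ / 2) = θ by ring] at hc2
        nlinarith
      have h2 : |Real.sin (θ / 2)| ≤ |θ / 2| := Real.abs_sin_le_abs
      have h3 : |Real.sin (θ / 2)| ≤ 1 := Real.abs_sin_le_one _
      have h4 : |θ / 2| = |θ| / 2 := by rw [abs_div]; norm_num
      nlinarith [sq_abs (Real.sin (θ / 2)), abs_nonneg (Real.sin (θ / 2))]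
    · rw [min_eq_right h]
      linarith [Real.neg_one_le_cos θ]
  have hminle : ∀ x : ℝ, min |2 * Real.pi * (t * x)| 2 ≤ min (2 * Real.pi * t * |x|) 2 := by
    intro x
    have hxe : |2 * Real.pi * (t * x)| = 2 * Real.pi * t * |x| := by
      rw [abs_mul (2 * Real.pi) (t * x), abs_mul t x, abs_of_nonneg Real.two_pi_pos.le,
        abs_of_nonneg ht]
      ring
    rw [hxe]
  have hcosle : ∀ x : ℝ, 1 - min (2 * Real.pi * t * |x|) 2 ≤ Real.cos (2 * Real.pi * (t * x)) :=
    fun x => le_trans (by linarith [hminle x, hcos_ge (2 * Real.pi * (t * x))])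
      (hcos_ge (2 * Real.pi * (t * x)))
  have hintmin : Integrable (fun x => min (2 * Real.pi * t * |x|) 2) μ :=
    intg_bdd ((continuous_const.mul continuous_abs).min continuous_const) (by
      intro x
      rw [abs_le]
      refine ⟨?_, min_le_right _ _⟩
      have : (0:ℝ) ≤ min (2 * Real.pi * t * |x|) 2 :=
        le_min (mul_nonneg hc (abs_nonneg x)) (by norm_num)
      linarith)
  have hintcos : Integrable (fun x => Real.cos (2 * Real.pi * (t * x))) μ :=
    intg_bdd (Real.continuous_cos.comp hcont) (fun x => Real.abs_cos_le_one _)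
  have hmono : ∫ x, (1 - min (2 * Real.pi * t * |x|) 2) ∂μ
      ≤ ∫ x, Real.cos (2 * Real.pi * (t * x)) ∂μ :=
    integral_mono ((integrable_const 1).sub hintmin) hintcos (fun x => by
      have := hcos_ge (2 * Real.pi * (t * x))
      have := hminle x
      simp only [Pi.sub_apply]
      linarith)
  rw [integral_sub (integrable_const 1) hintmin, integral_const, probReal_univ] at hmono
  simp only [ENNReal.toReal_one, one_smul, smul_eq_mul] at hmono
  have hA := Ftri_min_le hμ (2 * Real.pi * t) hc
  have hpos : 0 < ∫ x, Real.cos (2 * Real.pi * (t * x)) ∂μ := by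
    have : 1 - (2 * Real.pi * t) / 2 > 0 := by linarith
    linarith
  intro hzero
  rw [hF] at hzero
  have hre : (((∫ x, Real.cos (2 * Real.pi * (t * x)) ∂μ : ℝ) : ℂ)
      + ((∫ x, Real.sin (2 * Real.pi * (t * x)) ∂μ : ℝ) : ℂ) * Complex.I).re
      = ∫ x, Real.cos (2 * Real.pi * (t * x)) ∂μ := by
    simp
  rw [hzero] at hre
  simp at hre
  linarith

end Main

theorem triadic_not_orthogonal (μ : Measure ℝ) [IsProbabilityMeasure μ]
    (hμ : ∀ f : ℝ → ℝ, Continuous f →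
      ∫ x, f x ∂μ =
        (1 / 2) * ((∫ x, f (x / 3) ∂μ) + ∫ x, f (x / 3 + 2 / 3) ∂μ)) :
    (∫ x, Complex.exp ((((2 : ℝ) * Real.pi * ((3 / 4 : ℝ) * x) : ℝ) : ℂ) * Complex.I) ∂μ = 0) ∧
    (∫ x, Complex.exp ((((2 : ℝ) * Real.pi * ((9 / 4 : ℝ) * x) : ℝ) : ℂ) * Complex.I) ∂μ = 0) ∧
    (∫ x, Complex.exp ((((2 : ℝ) * Real.pi * ((3 / 2 : ℝ) * x) : ℝ) : ℂ) * Complex.I) ∂μ ≠ 0) := by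
  have h34 : Ftri μ (3 / 4) = 0 := by
    rw [Ftri_eq hμ (3 / 4)]
    have : (4 * Real.pi * (3 / 4) / 3 : ℝ) = Real.pi := by ring
    rw [this, Complex.exp_pi_mul_I]
    ring
  have h94 : Ftri μ (9 / 4) = 0 := by
    rw [Ftri_eq hμ (9 / 4)]
    have : (4 * Real.pi * (9 / 4) / 3 : ℝ) = Real.pi + 2 * Real.pi := by ring
    rw [this]
    have : Complex.exp (((Real.pi + 2 * Real.pi : ℝ) : ℂ) * Complex.I) = -1 := by
      push_cast
      rw [add_mul, Complex.exp_add, Complex.exp_pi_mul_I, Complex.exp_two_pi_mul_I]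
      ring
    rw [this]
    ring
  have h32 : Ftri μ (3 / 2) ≠ 0 := by
    have e1 : Ftri μ (3 / 2) = Ftri μ (1 / 2) := by
      rw [Ftri_eq hμ (3 / 2)]
      have : (4 * Real.pi * (3 / 2) / 3 : ℝ) = 2 * Real.pi := by ring
      rw [this]
      have : Complex.exp (((2 * Real.pi : ℝ) : ℂ) * Complex.I) = 1 := by
        push_cast
        exact Complex.exp_two_pi_mul_I
      rw [this]
      norm_num
    have e2 : Ftri μ (1 / 2) = (1 / 2 : ℂ)
        * (1 + Complex.exp (((4 * Real.pi * (1 / 2) / 3 : ℝ) : ℂ) * Complex.I))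
        * Ftri μ (1 / 2 / 3) := Ftri_eq hμ (1 / 2)
    have hfac : (1 : ℂ) + Complex.exp (((4 * Real.pi * (1 / 2) / 3 : ℝ) : ℂ) * Complex.I) ≠ 0 := by
      intro h
      have him := congrArg Complex.im h
      rw [Complex.add_im, Complex.one_im] at him
      have : (Complex.exp (((4 * Real.pi * (1 / 2) / 3 : ℝ) : ℂ) * Complex.I)).im
          = Real.sin (4 * Real.pi * (1 / 2) / 3) :=
        Complex.exp_ofReal_mul_I_im _
      rw [this] at him
      have hsin : 0 < Real.sin (4 * Real.pi * (1 / 2) / 3) := by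
        apply Real.sin_pos_of_pos_of_lt_pi
        · positivity
        · nlinarith [Real.pi_pos]
      simp at him
      linarith
    have hsmall : Ftri μ (1 / 2 / 3) ≠ 0 := by
      apply Ftri_small hμ
      · norm_num
      · nlinarith [Real.pi_lt_d2]
    rw [e1, e2]
    intro h
    rcases mul_eq_zero.1 h with h' | h'
    · rcases mul_eq_zero.1 h' with h'' | h''
      · norm_num at h''
      · exact hfac h''
    · exact hsmall h'
  exact ⟨h34, h94, h32⟩
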